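/- Let p ≥ 2, R > 0, β > 0, and let Z_n (n ≥ 1) and X be jointly measurable random fields from Ω × [0,1] × B(R) to ℝ^d such that, almost surely, |Z_n(t,x) − Z_n(s,y)| ≤ F_n (|x − y|^β + |t − s|^β) and |X(t,x) − X(s,y)| ≤ F (|x − y|^β + |t − s|^β) for all s, t ∈ [0,1] and x, y ∈ B(R), where F_n and F are nonnegative random variables with sup_{n ≥ 1} E(F_n^p) < +∞ and E(F^p) < +∞. If ε_n := sup_{0 ≤ t ≤ 1} sup_{|x| ≤ R} E( |Z_n(t,x) − X(t,x)|^p ) → 0 as n → ∞, then E( sup_{0 ≤ t ≤ 1} sup_{|x| ≤ R} |Z_n(t,x) − X(t,x)|^p ) → 0 as n → ∞. -/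

import Mathlib

open MeasureTheory ProbabilityTheory Filter
open scoped ENNReal

private lemma add_rpow_le_two_rpow {a b p : ℝ} (ha : 0 ≤ a) (hb : 0 ≤ b) (hp : 0 ≤ p) :
    (a + b) ^ p ≤ 2 ^ p * (a ^ p + b ^ p) := by
  have h2 : (0:ℝ) ≤ 2 := by norm_num
  rcases le_total a b with h | h
  · calc (a + b) ^ p ≤ (2 * b) ^ p :=
        Real.rpow_le_rpow (by linarith) (by linarith) hp
      _ = 2 ^ p * b ^ p := Real.mul_rpow h2 hb
      _ ≤ 2 ^ p * (a ^ p + b ^ p) := by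
        have h3 := Real.rpow_nonneg ha p
        have h4 := Real.rpow_nonneg h2 p
        nlinarith
  · calc (a + b) ^ p ≤ (2 * a) ^ p :=
        Real.rpow_le_rpow (by linarith) (by linarith) hp
      _ = 2 ^ p * a ^ p := Real.mul_rpow h2 ha
      _ ≤ 2 ^ p * (a ^ p + b ^ p) := by
        have h3 := Real.rpow_nonneg hb p
        have h4 := Real.rpow_nonneg h2 p
        nlinarith

private lemma ofReal_add_rpow_le {a b p : ℝ} (ha : 0 ≤ a) (hb : 0 ≤ b) (hp : 0 ≤ p) :
    ENNReal.ofReal ((a + b) ^ p) ≤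
      ENNReal.ofReal (2 ^ p) * (ENNReal.ofReal (a ^ p) + ENNReal.ofReal (b ^ p)) := by
  rw [← ENNReal.ofReal_add (Real.rpow_nonneg ha p) (Real.rpow_nonneg hb p),
    ← ENNReal.ofReal_mul (Real.rpow_nonneg (by norm_num) p)]
  exact ENNReal.ofReal_le_ofReal (add_rpow_le_two_rpow ha hb hp)

/-- Let `p ≥ 2`, `R > 0`, `β > 0` and let `Z_n` (`n ≥ 1`) and `X` be jointly measurable
random fields on `[0,1] × B(R)` which are a.s. Hölder in `(t,x)` with random constants
`F_n`, `F` bounded in `L^p`. If `ε_n := sup_{t ∈ [0,1]} sup_{|x| ≤ R} E(|Z_n(t,x) - X(t,x)|^p) → 0`,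
then `E( sup_{t ∈ [0,1]} sup_{|x| ≤ R} |Z_n(t,x) - X(t,x)|^p ) → 0`. -/
theorem uniform_moment_convergence_of_pointwise
    {Ω : Type*} [MeasureSpace Ω] [IsProbabilityMeasure (ℙ : Measure Ω)]
    {d : ℕ} (p R β : ℝ) (hp : 2 ≤ p) (hR : 0 < R) (hβ : 0 < β)
    (Z : ℕ → ℝ → EuclideanSpace ℝ (Fin d) → Ω → EuclideanSpace ℝ (Fin d))
    (X : ℝ → EuclideanSpace ℝ (Fin d) → Ω → EuclideanSpace ℝ (Fin d))
    (hZmeas : ∀ n, Measurable fun q : Ω × ℝ × EuclideanSpace ℝ (Fin d) =>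
      Z n q.2.1 q.2.2 q.1)
    (hXmeas : Measurable fun q : Ω × ℝ × EuclideanSpace ℝ (Fin d) => X q.2.1 q.2.2 q.1)
    (Fn : ℕ → Ω → ℝ) (F : Ω → ℝ)
    (hFnmeas : ∀ n, Measurable (Fn n)) (hFmeas : Measurable F)
    (hFnpos : ∀ n ω, 0 ≤ Fn n ω) (hFpos : ∀ ω, 0 ≤ F ω)
    (hZhold : ∀ n, 1 ≤ n → ∀ᵐ ω,
      ∀ s ∈ Set.Icc (0 : ℝ) 1, ∀ t ∈ Set.Icc (0 : ℝ) 1,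
        ∀ x ∈ Metric.closedBall (0 : EuclideanSpace ℝ (Fin d)) R,
          ∀ y ∈ Metric.closedBall (0 : EuclideanSpace ℝ (Fin d)) R,
            ‖Z n t x ω - Z n s y ω‖ ≤ Fn n ω * (‖x - y‖ ^ β + |t - s| ^ β))
    (hXhold : ∀ᵐ ω,
      ∀ s ∈ Set.Icc (0 : ℝ) 1, ∀ t ∈ Set.Icc (0 : ℝ) 1,
        ∀ x ∈ Metric.closedBall (0 : EuclideanSpace ℝ (Fin d)) R,
          ∀ y ∈ Metric.closedBall (0 : EuclideanSpace ℝ (Fin d)) R,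
            ‖X t x ω - X s y ω‖ ≤ F ω * (‖x - y‖ ^ β + |t - s| ^ β))
    (hFnLp : (⨆ (n : ℕ) (_ : 1 ≤ n), ∫⁻ ω, ENNReal.ofReal (Fn n ω ^ p)) < ⊤)
    (hFLp : (∫⁻ ω, ENNReal.ofReal (F ω ^ p)) < ⊤)
    (hpointwise : Tendsto
      (fun n => ⨆ (t : Set.Icc (0 : ℝ) 1)
          (x : Metric.closedBall (0 : EuclideanSpace ℝ (Fin d)) R),
        ∫⁻ ω, ENNReal.ofReal (‖Z n t.1 x.1 ω - X t.1 x.1 ω‖ ^ p))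
      atTop (nhds 0)) :
    Tendsto
      (fun n => ∫⁻ ω, ENNReal.ofReal
        ((⨆ (t : Set.Icc (0 : ℝ) 1)
            (x : Metric.closedBall (0 : EuclideanSpace ℝ (Fin d)) R),
          ‖Z n t.1 x.1 ω - X t.1 x.1 ω‖) ^ p))
      atTop (nhds 0) := by
  classical
  have hp0 : (0:ℝ) < p := by linarith
  haveI hIcc : Nonempty (Set.Icc (0:ℝ) 1) :=
    (Set.nonempty_Icc.mpr zero_le_one).to_subtype
  haveI hBall : Nonempty (Metric.closedBall (0 : (EuclideanSpace ℝ (Fin d))) R) :=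
    (Metric.nonempty_closedBall.mpr hR.le).to_subtype
  -- basic measurability
  have hg : ∀ n (t : ℝ) (x : (EuclideanSpace ℝ (Fin d))), Measurable fun ω => ‖Z n t x ω - X t x ω‖ := by
    intro n t x
    have hpair : Measurable fun ω : Ω => (ω, ((t, x) : ℝ × (EuclideanSpace ℝ (Fin d)))) :=
      measurable_id.prodMk measurable_const
    have h1 : Measurable fun ω : Ω => Z n t x ω := (hZmeas n).comp hpair
    have h2 : Measurable fun ω : Ω => X t x ω := hXmeas.comp hpair
    exact (h1.sub h2).norm
  -- the constants
  set C1 : ℝ≥0∞ := ⨆ (n : ℕ) (_ : 1 ≤ n), ∫⁻ ω, ENNReal.ofReal (Fn n ω ^ p) with hC1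
  set C2 : ℝ≥0∞ := ∫⁻ ω, ENNReal.ofReal (F ω ^ p) with hC2
  set CF : ℝ≥0∞ := C1 + C2 with hCF
  have hCFfin : CF ≠ ⊤ := by
    simp only [hCF, ENNReal.add_ne_top]
    exact ⟨hFnLp.ne, hFLp.ne⟩
  set Ctot : ℝ≥0∞ := ENNReal.ofReal (2 ^ p) * ENNReal.ofReal (2 ^ p) * CF with hCtot
  have hCtotfin : Ctot ≠ ⊤ := by
    simp only [hCtot]
    exact ENNReal.mul_ne_top (ENNReal.mul_ne_top ENNReal.ofReal_ne_top ENNReal.ofReal_ne_top)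
      hCFfin
  -- εₙ from the pointwise hypothesis
  set En : ℕ → ℝ≥0∞ := fun n => ⨆ (t : Set.Icc (0 : ℝ) 1)
      (x : Metric.closedBall (0 : (EuclideanSpace ℝ (Fin d))) R),
    ∫⁻ ω, ENNReal.ofReal (‖Z n t.1 x.1 ω - X t.1 x.1 ω‖ ^ p) with hEn
  rw [ENNReal.tendsto_nhds_zero]
  intro ε hε
  -- choose δ
  have hΦ : Tendsto (fun δ : ℝ => ENNReal.ofReal ((2 * δ ^ β) ^ p) * Ctot)
      (nhds 0) (nhds 0) := by
    have h1 : Tendsto (fun δ : ℝ => δ ^ β) (nhds 0) (nhds 0) := by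
      have := (Real.continuousAt_rpow_const 0 β (Or.inr hβ.le)).tendsto
      simpa [Real.zero_rpow hβ.ne'] using this
    have h2 : Tendsto (fun y : ℝ => (2 * y) ^ p) (nhds 0) (nhds 0) := by
      have hc : Tendsto (fun y : ℝ => 2 * y) (nhds 0) (nhds 0) := by
        have := (continuous_mul_left (2:ℝ)).tendsto (0 : ℝ)
        rwa [mul_zero] at this
      have := (Real.continuousAt_rpow_const 0 p (Or.inr hp0.le)).tendsto
      simpa [Function.comp_def, Real.zero_rpow hp0.ne'] using this.comp hc
    have h3 : Tendsto (fun δ : ℝ => ENNReal.ofReal ((2 * δ ^ β) ^ p))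
        (nhds 0) (nhds 0) := by
      have := (ENNReal.continuous_ofReal.tendsto 0).comp (h2.comp h1)
      simpa [Function.comp_def] using this
    have := ENNReal.Tendsto.mul_const h3 (Or.inr hCtotfin)
    simpa using this
  have hhalf : (0:ℝ≥0∞) < ε / 2 := ENNReal.half_pos hε.ne'
  have hev : ∀ᶠ δ in nhdsWithin (0:ℝ) (Set.Ioi 0),
      ENNReal.ofReal ((2 * δ ^ β) ^ p) * Ctot < ε / 2 :=
    ((hΦ.mono_left nhdsWithin_le_nhds).eventually_lt_const hhalf)
  obtain ⟨δ, hΦδ, hδpos⟩ :=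
    (hev.and (eventually_mem_nhdsWithin)).exists
  rw [Set.mem_Ioi] at hδpos
  -- construct a finite δ-net of K
  set K : Set (ℝ × (EuclideanSpace ℝ (Fin d))) := Set.Icc (0:ℝ) 1 ×ˢ Metric.closedBall (0 : (EuclideanSpace ℝ (Fin d))) R with hKdef
  have hKcompact : IsCompact K :=
    isCompact_Icc.prod (isCompact_closedBall _ _)
  obtain ⟨net, hnetK, hnetfin, hnetcover⟩ :=
    totallyBounded_iff_subset.mp hKcompact.totallyBounded _ (Metric.dist_mem_uniformity hδpos)
  set ι : Finset (ℝ × (EuclideanSpace ℝ (Fin d))) := hnetfin.toFinset with hι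
  have hιK : ∀ i ∈ ι, i ∈ K := by
    intro i hi
    exact hnetK (hnetfin.mem_toFinset.mp hi)
  have hKne : ((0:ℝ), (0:(EuclideanSpace ℝ (Fin d)))) ∈ K := by
    refine ⟨⟨le_refl 0, zero_le_one⟩, Metric.mem_closedBall_self hR.le⟩
  have hιne : ι.Nonempty := by
    obtain ⟨y, hy, -⟩ := Set.mem_iUnion₂.mp (hnetcover hKne)
    exact ⟨y, hnetfin.mem_toFinset.mpr hy⟩
  have hnet : ∀ q ∈ K, ∃ i ∈ ι, dist q i < δ := by
    intro q hq
    obtain ⟨y, hy, hdy⟩ := Set.mem_iUnion₂.mp (hnetcover hq)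
    exact ⟨y, hnetfin.mem_toFinset.mpr hy, by simpa using hdy⟩
  set N : ℝ≥0∞ := (ι.card : ℝ≥0∞) with hN
  -- the pointwise term eventually small
  have hc0fin : ENNReal.ofReal (2 ^ p) * N ≠ ⊤ :=
    ENNReal.mul_ne_top ENNReal.ofReal_ne_top (ENNReal.natCast_ne_top _)
  have hevn : ∀ᶠ n in atTop, ENNReal.ofReal (2 ^ p) * N * En n ≤ ε / 2 := by
    have h1 := ENNReal.Tendsto.const_mul (a := ENNReal.ofReal (2 ^ p) * N)
      hpointwise (Or.inr hc0fin)
    rw [mul_zero] at h1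
    exact ENNReal.tendsto_nhds_zero.mp h1 _ hhalf
  filter_upwards [hevn, eventually_ge_atTop 1] with n hn2 hn1
  -- notation for this n
  set g : ℝ × (EuclideanSpace ℝ (Fin d)) → Ω → ℝ := fun i ω => ‖Z n i.1 i.2 ω - X i.1 i.2 ω‖ with hgdef
  set Mf : Ω → ℝ := fun ω => ι.sup' hιne (fun i => g i ω) with hMf
  set cf : Ω → ℝ := fun ω => (2 * δ ^ β) * (Fn n ω + F ω) with hcf
  -- a.e. pointwise bound
  have hae : ∀ᵐ ω, ENNReal.ofReal
      ((⨆ (t : Set.Icc (0 : ℝ) 1) (x : Metric.closedBall (0 : (EuclideanSpace ℝ (Fin d))) R),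
        ‖Z n t.1 x.1 ω - X t.1 x.1 ω‖) ^ p) ≤
      ENNReal.ofReal (2 ^ p) *
        (ENNReal.ofReal (Mf ω ^ p) + ENNReal.ofReal (cf ω ^ p)) := by
    filter_upwards [hZhold n hn1, hXhold] with ω hZω hXω
    have hM0 : 0 ≤ Mf ω := by
      obtain ⟨i, hi⟩ := hιne
      exact le_trans (norm_nonneg _) (Finset.le_sup' (fun i => g i ω) hi)
    have hFn0 := hFnpos n ω
    have hF0 := hFpos ω
    have hδβ : (0:ℝ) ≤ δ ^ β := Real.rpow_nonneg hδpos.le β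
    have hc0 : 0 ≤ cf ω := by
      simp only [hcf]; positivity
    have hD : (⨆ (t : Set.Icc (0 : ℝ) 1) (x : Metric.closedBall (0 : (EuclideanSpace ℝ (Fin d))) R),
        ‖Z n t.1 x.1 ω - X t.1 x.1 ω‖) ≤ Mf ω + cf ω := by
      refine ciSup_le fun t => ciSup_le fun x => ?_
      have hqK : ((t.1 : ℝ), (x.1 : (EuclideanSpace ℝ (Fin d)))) ∈ K := ⟨t.2, x.2⟩
      obtain ⟨i, hi, hdist⟩ := hnet _ hqK
      obtain ⟨hi1, hi2⟩ := hιK i hi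
      have hdt : |t.1 - i.1| ≤ δ := by
        have : dist (t.1 : ℝ) i.1 ≤ dist ((t.1 : ℝ), (x.1 : (EuclideanSpace ℝ (Fin d)))) i :=
          le_max_left _ _
        rw [Real.dist_eq] at this
        exact this.trans hdist.le
      have hdx : ‖(x.1 : (EuclideanSpace ℝ (Fin d))) - i.2‖ ≤ δ := by
        have : dist (x.1 : (EuclideanSpace ℝ (Fin d))) i.2 ≤ dist ((t.1 : ℝ), (x.1 : (EuclideanSpace ℝ (Fin d)))) i :=
          le_max_right _ _
        rw [dist_eq_norm] at this
        exact this.trans hdist.le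
      have hdtβ : |t.1 - i.1| ^ β ≤ δ ^ β :=
        Real.rpow_le_rpow (abs_nonneg _) hdt hβ.le
      have hdxβ : ‖(x.1 : (EuclideanSpace ℝ (Fin d))) - i.2‖ ^ β ≤ δ ^ β :=
        Real.rpow_le_rpow (norm_nonneg _) hdx hβ.le
      have hZb := hZω i.1 hi1 t.1 t.2 x.1 x.2 i.2 hi2
      have hXb := hXω t.1 t.2 i.1 hi1 i.2 hi2 x.1 x.2
      have htri : ‖Z n t.1 x.1 ω - X t.1 x.1 ω‖ ≤
          ‖Z n t.1 x.1 ω - Z n i.1 i.2 ω‖ + ‖Z n i.1 i.2 ω - X i.1 i.2 ω‖ +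
            ‖X i.1 i.2 ω - X t.1 x.1 ω‖ := by
        have : Z n t.1 x.1 ω - X t.1 x.1 ω =
            (Z n t.1 x.1 ω - Z n i.1 i.2 ω) + (Z n i.1 i.2 ω - X i.1 i.2 ω) +
              (X i.1 i.2 ω - X t.1 x.1 ω) := by abel
        rw [this]
        exact norm_add₃_le
      have hXb' : ‖X i.1 i.2 ω - X t.1 x.1 ω‖ ≤
          F ω * (‖(x.1 : (EuclideanSpace ℝ (Fin d))) - i.2‖ ^ β + |t.1 - i.1| ^ β) := by
        have h := hXb
        rwa [norm_sub_rev (i.2 : (EuclideanSpace ℝ (Fin d))), abs_sub_comm i.1] at h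
      have hMi : g i ω ≤ Mf ω := Finset.le_sup' (fun j => g j ω) hi
      have hgi : g i ω = ‖Z n i.1 i.2 ω - X i.1 i.2 ω‖ := rfl
      have hA := norm_nonneg ((x.1 : (EuclideanSpace ℝ (Fin d))) - i.2)
      have h1 : ‖Z n t.1 x.1 ω - Z n i.1 i.2 ω‖ ≤ Fn n ω * (2 * δ ^ β) := by
        nlinarith [Real.rpow_nonneg (norm_nonneg ((x.1:(EuclideanSpace ℝ (Fin d))) - i.2)) β,
          Real.rpow_nonneg (abs_nonneg (t.1 - i.1)) β]
      have h2 : ‖X i.1 i.2 ω - X t.1 x.1 ω‖ ≤ F ω * (2 * δ ^ β) := by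
        nlinarith [Real.rpow_nonneg (norm_nonneg ((x.1:(EuclideanSpace ℝ (Fin d))) - i.2)) β,
          Real.rpow_nonneg (abs_nonneg (t.1 - i.1)) β]
      have : ‖Z n t.1 x.1 ω - X t.1 x.1 ω‖ ≤ Mf ω + cf ω := by
        simp only [hcf]
        nlinarith
      exact this
    have hDnn : 0 ≤ ⨆ (t : Set.Icc (0 : ℝ) 1) (x : Metric.closedBall (0 : (EuclideanSpace ℝ (Fin d))) R),
        ‖Z n t.1 x.1 ω - X t.1 x.1 ω‖ :=
      Real.iSup_nonneg fun t => Real.iSup_nonneg fun x => norm_nonneg _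
    exact le_trans (ENNReal.ofReal_le_ofReal (Real.rpow_le_rpow hDnn hD hp0.le))
      (ofReal_add_rpow_le hM0 hc0 hp0.le)
  -- integrate
  have hcfmeas : Measurable fun ω => ENNReal.ofReal (cf ω ^ p) := by
    apply Measurable.ennreal_ofReal
    exact (((hFnmeas n).add hFmeas).const_mul _).pow measurable_const
  have hgi_meas : ∀ i : ℝ × (EuclideanSpace ℝ (Fin d)), Measurable fun ω => ENNReal.ofReal (g i ω ^ p) := by
    intro i
    exact ((hg n i.1 i.2).pow measurable_const).ennreal_ofReal
  have hstep : (∫⁻ ω, ENNReal.ofReal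
      ((⨆ (t : Set.Icc (0 : ℝ) 1) (x : Metric.closedBall (0 : (EuclideanSpace ℝ (Fin d))) R),
        ‖Z n t.1 x.1 ω - X t.1 x.1 ω‖) ^ p)) ≤
      ENNReal.ofReal (2 ^ p) *
        ((∫⁻ ω, ENNReal.ofReal (Mf ω ^ p)) + ∫⁻ ω, ENNReal.ofReal (cf ω ^ p)) := by
    calc (∫⁻ ω, ENNReal.ofReal
        ((⨆ (t : Set.Icc (0 : ℝ) 1) (x : Metric.closedBall (0 : (EuclideanSpace ℝ (Fin d))) R),
          ‖Z n t.1 x.1 ω - X t.1 x.1 ω‖) ^ p))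
        ≤ ∫⁻ ω, ENNReal.ofReal (2 ^ p) *
            (ENNReal.ofReal (Mf ω ^ p) + ENNReal.ofReal (cf ω ^ p)) :=
          lintegral_mono_ae hae
      _ = ENNReal.ofReal (2 ^ p) *
          ∫⁻ ω, (ENNReal.ofReal (Mf ω ^ p) + ENNReal.ofReal (cf ω ^ p)) :=
          lintegral_const_mul' _ _ ENNReal.ofReal_ne_top
      _ = ENNReal.ofReal (2 ^ p) *
          ((∫⁻ ω, ENNReal.ofReal (Mf ω ^ p)) + ∫⁻ ω, ENNReal.ofReal (cf ω ^ p)) := by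
          rw [lintegral_add_right _ hcfmeas]
  -- bound the M-part
  have hMpart : (∫⁻ ω, ENNReal.ofReal (Mf ω ^ p)) ≤ N * En n := by
    have hptw : ∀ ω, ENNReal.ofReal (Mf ω ^ p) ≤
        ∑ i ∈ ι, ENNReal.ofReal (g i ω ^ p) := by
      intro ω
      obtain ⟨i, hi, hMeq⟩ := Finset.exists_mem_eq_sup' hιne (fun i => g i ω)
      rw [hMf]
      simp only
      rw [hMeq]
      exact Finset.single_le_sum (f := fun j => ENNReal.ofReal (g j ω ^ p)) (fun j _ => zero_le) hi
    calc (∫⁻ ω, ENNReal.ofReal (Mf ω ^ p))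
        ≤ ∫⁻ ω, ∑ i ∈ ι, ENNReal.ofReal (g i ω ^ p) := lintegral_mono hptw
      _ = ∑ i ∈ ι, ∫⁻ ω, ENNReal.ofReal (g i ω ^ p) :=
          lintegral_finset_sum _ (fun i _ => hgi_meas i)
      _ ≤ ∑ i ∈ ι, En n := by
          refine Finset.sum_le_sum fun i hi => ?_
          obtain ⟨hi1, hi2⟩ := hιK i hi
          have := le_iSup₂ (f := fun (t : Set.Icc (0:ℝ) 1)
              (x : Metric.closedBall (0:(EuclideanSpace ℝ (Fin d))) R) =>
            ∫⁻ ω, ENNReal.ofReal (‖Z n t.1 x.1 ω - X t.1 x.1 ω‖ ^ p))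
            ⟨i.1, hi1⟩ ⟨i.2, hi2⟩
          exact this
      _ = N * En n := by rw [Finset.sum_const, nsmul_eq_mul]
  -- bound the c-part
  have hcpart : (∫⁻ ω, ENNReal.ofReal (cf ω ^ p)) ≤
      ENNReal.ofReal ((2 * δ ^ β) ^ p) * (ENNReal.ofReal (2 ^ p) * CF) := by
    have hδβ : (0:ℝ) ≤ 2 * δ ^ β := by positivity
    have hptw : ∀ ω, ENNReal.ofReal (cf ω ^ p) ≤
        ENNReal.ofReal ((2 * δ ^ β) ^ p) * (ENNReal.ofReal (2 ^ p) *
          (ENNReal.ofReal (Fn n ω ^ p) + ENNReal.ofReal (F ω ^ p))) := by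
      intro ω
      have : cf ω ^ p = (2 * δ ^ β) ^ p * (Fn n ω + F ω) ^ p :=
        Real.mul_rpow hδβ (by have := hFnpos n ω; have := hFpos ω; linarith)
      rw [hcf]
      simp only
      rw [this, ENNReal.ofReal_mul (Real.rpow_nonneg hδβ p)]
      exact mul_le_mul_right (ofReal_add_rpow_le (hFnpos n ω) (hFpos ω) hp0.le) _
    calc (∫⁻ ω, ENNReal.ofReal (cf ω ^ p))
        ≤ ∫⁻ ω, ENNReal.ofReal ((2 * δ ^ β) ^ p) * (ENNReal.ofReal (2 ^ p) *
            (ENNReal.ofReal (Fn n ω ^ p) + ENNReal.ofReal (F ω ^ p))) :=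
          lintegral_mono hptw
      _ = ENNReal.ofReal ((2 * δ ^ β) ^ p) * (ENNReal.ofReal (2 ^ p) *
            ∫⁻ ω, (ENNReal.ofReal (Fn n ω ^ p) + ENNReal.ofReal (F ω ^ p))) := by
          rw [lintegral_const_mul' _ _ ENNReal.ofReal_ne_top,
            lintegral_const_mul' _ _ ENNReal.ofReal_ne_top]
      _ ≤ ENNReal.ofReal ((2 * δ ^ β) ^ p) * (ENNReal.ofReal (2 ^ p) * CF) := by
          refine mul_le_mul_right (mul_le_mul_right ?_ _) _
          rw [lintegral_add_right _ (hFmeas.pow measurable_const).ennreal_ofReal]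
          refine add_le_add ?_ le_rfl
          exact le_iSup₂ (f := fun (m : ℕ) (_ : 1 ≤ m) =>
            ∫⁻ ω, ENNReal.ofReal (Fn m ω ^ p)) n hn1
  -- combine
  calc (∫⁻ ω, ENNReal.ofReal
      ((⨆ (t : Set.Icc (0 : ℝ) 1) (x : Metric.closedBall (0 : (EuclideanSpace ℝ (Fin d))) R),
        ‖Z n t.1 x.1 ω - X t.1 x.1 ω‖) ^ p))
      ≤ ENNReal.ofReal (2 ^ p) *
        ((∫⁻ ω, ENNReal.ofReal (Mf ω ^ p)) + ∫⁻ ω, ENNReal.ofReal (cf ω ^ p)) := hstep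
    _ ≤ ENNReal.ofReal (2 ^ p) *
        (N * En n + ENNReal.ofReal ((2 * δ ^ β) ^ p) * (ENNReal.ofReal (2 ^ p) * CF)) :=
        mul_le_mul_right (add_le_add hMpart hcpart) _
    _ = ENNReal.ofReal (2 ^ p) * N * En n + ENNReal.ofReal ((2 * δ ^ β) ^ p) * Ctot := by
        rw [hCtot]; ring
    _ ≤ ε / 2 + ε / 2 := add_le_add hn2 hΦδ.le
    _ = ε := ENNReal.add_halves ε
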